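/- Let v ∈ 𝔐 and let φ be a nonzero nef vector lying in cone(𝒞) with ⟨φ, v⟩ = 0. Then there exists a nef-minimal subset I ⊆ 𝒞 such that ⟨c, v⟩ = 0 for every c ∈ I, i.e. v ∈ F(I). (The key step in the proof of the paper's Proposition 4.8.) -/

import Mathlib

open Finset

/-- `v` lies in `cone(S)`: it is a finite nonnegative real linear combination
of elements of `S`. -/
def InCone {V : Type*} [AddCommGroup V] [Module ℝ V] (S : Set V) (v : V) : Prop :=
  ∃ (n : ℕ) (c : Fin n → ℝ) (g : Fin n → V),
    (∀ t, 0 ≤ c t) ∧ (∀ t, g t ∈ S) ∧ v = ∑ t, c t • g t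

/-- A vector `φ` is nef (with respect to `𝒟`) if `⟨φ, D⟩ ≥ 0` for all `D ∈ 𝒟`. -/
def IsNefVec {V : Type*} [NormedAddCommGroup V] [InnerProductSpace ℝ V]
    (𝒟 : Finset V) (φ : V) : Prop :=
  ∀ D ∈ 𝒟, 0 ≤ (inner ℝ φ D : ℝ)

/-- A subset `I ⊆ 𝒞` is nef-minimal if `cone(I)` contains a nonzero nef vector
and `cone(J)` contains no nonzero nef vector for any proper subset `J ⊊ I`. -/
def NefMinimal {V : Type*} [NormedAddCommGroup V] [InnerProductSpace ℝ V]
    (𝒟 𝒞 : Finset V) (I : Set V) : Prop :=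
  I ⊆ (𝒞 : Set V) ∧
  (∃ φ : V, φ ≠ 0 ∧ IsNefVec 𝒟 φ ∧ InCone I φ) ∧
  ∀ J : Set V, J ⊂ I → ¬∃ φ : V, φ ≠ 0 ∧ IsNefVec 𝒟 φ ∧ InCone J φ

/-- **Key step in the proof of Proposition 4.8.**  Let `v ∈ 𝔐` and let `φ` be a
nonzero nef vector lying in `cone(𝒞)` with `⟨φ, v⟩ = 0`.  Then there is a
nef-minimal subset `I ⊆ 𝒞` with `⟨c, v⟩ = 0` for every `c ∈ I`, i.e. `v ∈ F(I)`. -/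
theorem exists_nefMinimal_vanishing
    {V : Type*} [NormedAddCommGroup V] [InnerProductSpace ℝ V]
    [FiniteDimensional ℝ V]
    (𝒟 𝒞 : Finset V)
    (v : V) (hv : ∀ c ∈ 𝒞, 0 ≤ (inner ℝ c v : ℝ))
    (φ : V) (hφ : φ ≠ 0) (hnef : IsNefVec 𝒟 φ) (hcone : InCone (𝒞 : Set V) φ)
    (hperp : (inner ℝ φ v : ℝ) = 0) :
    ∃ I : Set V, NefMinimal 𝒟 𝒞 I ∧ ∀ c ∈ I, (inner ℝ c v : ℝ) = 0 := by
  classical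
  set I₀ : Finset V := 𝒞.filter (fun c => (inner ℝ c v : ℝ) = 0) with hI₀
  obtain ⟨n, c, g, hc, hg, hsum⟩ := hcone
  -- each term c t * ⟨g t, v⟩ = 0
  have hterm : ∀ t : Fin n, c t * (inner ℝ (g t) v : ℝ) = 0 := by
    have hsum' : ∑ t, c t * (inner ℝ (g t) v : ℝ) = 0 := by
      rw [← hperp, hsum, sum_inner]
      simp [real_inner_smul_left]
    have hnn : ∀ t ∈ Finset.univ, 0 ≤ c t * (inner ℝ (g t) v : ℝ) :=
      fun t _ => mul_nonneg (hc t) (hv _ (hg t))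
    intro t
    exact (Finset.sum_eq_zero_iff_of_nonneg hnn).mp hsum' t (Finset.mem_univ t)
  have hczero : ∀ t : Fin n, g t ∉ (I₀ : Set V) → c t = 0 := by
    intro t ht
    by_contra hct
    apply ht
    have : (inner ℝ (g t) v : ℝ) = 0 := by
      have := hterm t
      rcases mul_eq_zero.mp this with h | h
      · exact absurd h hct
      · exact h
    simp only [hI₀, Finset.coe_filter, Set.mem_setOf_eq]
    exact ⟨hg t, this⟩
  -- find some d ∈ I₀
  have hd : ∃ d, d ∈ I₀ := by
    by_contra hempty
    push_neg at hempty
    apply hφ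
    rw [hsum]
    apply Finset.sum_eq_zero
    intro t _
    have : c t = 0 := hczero t (by simpa using hempty (g t))
    simp [this]
  obtain ⟨d, hdI₀⟩ := hd
  -- φ ∈ cone(I₀)
  have hconeI₀ : InCone (I₀ : Set V) φ := by
    refine ⟨n, c, fun t => if g t ∈ I₀ then g t else d, hc, ?_, ?_⟩
    · intro t; by_cases h : g t ∈ I₀ <;> simp [h, hdI₀]
    · rw [hsum]
      apply Finset.sum_congr rfl
      intro t _
      by_cases h : g t ∈ I₀
      · simp [h]
      · have : c t = 0 := hczero t (by simpa using h)
        simp [this]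
  -- collection of good finsets
  set P : Finset V → Prop :=
    fun J => J ⊆ I₀ ∧ ∃ ψ : V, ψ ≠ 0 ∧ IsNefVec 𝒟 ψ ∧ InCone (J : Set V) ψ with hP
  have hPI₀ : P I₀ := ⟨Finset.Subset.refl _, φ, hφ, hnef, hconeI₀⟩
  set s : Finset (Finset V) := I₀.powerset.filter P with hs
  have hmemI₀ : I₀ ∈ s := Finset.mem_filter.mpr ⟨Finset.mem_powerset_self _, hPI₀⟩
  obtain ⟨J, hJs, hJmin⟩ := s.exists_min_image Finset.card ⟨I₀, hmemI₀⟩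
  have hJP : P J := (Finset.mem_filter.mp hJs).2
  have hJI₀ : J ⊆ I₀ := hJP.1
  refine ⟨(J : Set V), ⟨?_, hJP.2, ?_⟩, ?_⟩
  · intro x hx
    have := hJI₀ hx
    exact Finset.mem_coe.mpr (Finset.mem_filter.mp this).1
  · rintro K hK ⟨ψ, hψ, hψnef, m, a, b, ha, hb, hψsum⟩
    obtain ⟨x, hxJ, hxK⟩ : ∃ x, x ∈ (J : Set V) ∧ x ∉ K := by
      obtain ⟨hsub, hne⟩ := hK
      obtain ⟨x, hx1, hx2⟩ := Set.not_subset.mp hne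
      exact ⟨x, hx1, hx2⟩
    set K' : Finset V := Finset.univ.image b with hK'
    have hK'J : K' ⊆ J := by
      intro y hy
      obtain ⟨t, _, rfl⟩ := Finset.mem_image.mp hy
      exact Finset.mem_coe.mp (hK.1 (hb t))
    have hK'ne : K' ≠ J := by
      intro h
      apply hxK
      have : x ∈ K' := h ▸ Finset.mem_coe.mp hxJ
      obtain ⟨t, _, rfl⟩ := Finset.mem_image.mp this
      exact hb t
    have hK's : K' ∈ s := by
      refine Finset.mem_filter.mpr ⟨Finset.mem_powerset.mpr (hK'J.trans hJI₀), hK'J.trans hJI₀, ψ, hψ, hψnef, m, a, b, ha, ?_, hψsum⟩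
      intro t
      exact Finset.mem_coe.mpr (Finset.mem_image.mpr ⟨t, Finset.mem_univ t, rfl⟩)
    have hlt : K'.card < J.card :=
      Finset.card_lt_card (Finset.ssubset_iff_subset_ne.mpr ⟨hK'J, hK'ne⟩)
    exact absurd (hJmin K' hK's) (not_le.mpr hlt)
  · intro x hx
    have := hJI₀ (Finset.mem_coe.mp hx)
    exact (Finset.mem_filter.mp this).2
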